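/- Let H be a graph, let k ∈ {0,1}, and let G be the graph obtained from H by subdividing one edge once. If p is a real number such that φ(H − W) ≤ p for every set W of edges of H with |W| = k, then φ(G − W') ≤ p for every set W' of edges of G with |W'| = k. (Here G − W denotes the graph obtained from G by deleting the edges in W.) -/

import Mathlib

open SimpleGraph

namespace InducedForest

/-- A graph is subcubic if every vertex has at most 3 neighbours. -/
def Subcubic {V : Type} (G : SimpleGraph V) : Prop := ∀ v : V, (G.neighborSet v).ncard ≤ 3

/-- A graph is cubic if every vertex has exactly 3 neighbours. -/
def Cubic {V : Type} (G : SimpleGraph V) : Prop := ∀ v : V, (G.neighborSet v).ncard = 3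

/-- `S` is a feedback vertex set of `G` iff `G - S` is a forest. -/
def IsFVS {V : Type} (G : SimpleGraph V) (S : Set V) : Prop := (G.induce Sᶜ).IsAcyclic

/-- `φ(G)`: the minimum size of a feedback vertex set of `G`. -/
noncomputable def fvs {V : Type} (G : SimpleGraph V) : ℕ :=
  sInf {n : ℕ | ∃ S : Set V, IsFVS G S ∧ S.ncard = n}

/-- `a(G)`: the maximum number of vertices of an induced forest in `G`. -/
noncomputable def indForestNum {V : Type} (G : SimpleGraph V) : ℕ :=
  sSup {n : ℕ | ∃ S : Set V, (G.induce S).IsAcyclic ∧ S.ncard = n}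

/-- `v` is a cut-vertex of `G`: deleting it increases the number of connected components. -/
def IsCutVertex {V : Type} (G : SimpleGraph V) (v : V) : Prop :=
  Nat.card G.ConnectedComponent < Nat.card (G.induce {u | u ≠ v}).ConnectedComponent

/-- `B` is a block of `G`: a maximal set of vertices inducing a connected subgraph
without cut-vertices. -/
def IsBlock {V : Type} (G : SimpleGraph V) (B : Set V) : Prop :=
  ((G.induce B).Connected ∧ ∀ v, ¬ IsCutVertex (G.induce B) v) ∧
  ∀ B' : Set V, B ⊆ B' →
    ((G.induce B').Connected ∧ ∀ v, ¬ IsCutVertex (G.induce B') v) → B' = B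

/-- 2-connectedness: at least 3 vertices and removing fewer than 2 vertices
leaves a connected graph. -/
def TwoConnected {V : Type} (G : SimpleGraph V) : Prop :=
  3 ≤ Nat.card V ∧ ∀ s : Set V, s.ncard < 2 → (G.induce sᶜ).Connected

/-- 3-connectedness: at least 4 vertices and removing fewer than 3 vertices
leaves a connected graph. -/
def ThreeConnected {V : Type} (G : SimpleGraph V) : Prop :=
  4 ≤ Nat.card V ∧ ∀ s : Set V, s.ncard < 3 → (G.induce sᶜ).Connected

/-- The graph obtained from `H` by subdividing the edge `xy` once;
the subdivision vertex is `none`. -/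
def subdivide {V : Type} (H : SimpleGraph V) (x y : V) : SimpleGraph (Option V) :=
  SimpleGraph.fromRel (fun p q =>
    match p, q with
    | some u, some v => H.Adj u v ∧ s(u, v) ≠ s(x, y)
    | some u, none => u = x ∨ u = y
    | _, _ => False)

/-- `G` is obtained from `H` by subdividing one edge once. -/
def IsSubdivisionOfOneEdge {V W : Type} (H : SimpleGraph V) (G : SimpleGraph W) : Prop :=
  ∃ x y : V, H.Adj x y ∧ Nonempty (G ≃g subdivide H x y)

/-- The graph obtained from `K` by adding one new vertex (`none`)
joined to all vertices of `S`. -/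
def addApex {V : Type} (K : SimpleGraph V) (S : Set V) : SimpleGraph (Option V) :=
  SimpleGraph.fromRel (fun p q =>
    match p, q with
    | some u, some v => K.Adj u v
    | some u, none => u ∈ S
    | _, _ => False)

/-- `G` is (isomorphic to) `H ∘ (e1, e2, a)`: subdivide `e1` and `e2` once each
(with `e1` subdivided twice if `e1 = e2`) and add a new vertex adjacent to `a` and to the
two subdivision vertices. -/
def IsCircOp {V W : Type} (H : SimpleGraph V) (e1 e2 : Sym2 V) (a : V)
    (G : SimpleGraph W) : Prop :=
  (e1 ≠ e2 ∧ ∃ x1 y1 x2 y2 : V, e1 = s(x1, y1) ∧ e2 = s(x2, y2) ∧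
    Nonempty (G ≃g addApex (subdivide (subdivide H x1 y1) (some x2) (some y2))
      {some (some a), some none, none})) ∨
  (e1 = e2 ∧ ∃ x y : V, e1 = s(x, y) ∧
    Nonempty (G ≃g addApex (subdivide (subdivide H x y) none (some y))
      {some (some a), some none, none}))

/-- The cycle of length `n` (for `n ≥ 3`). -/
def cyc (n : ℕ) : SimpleGraph (ZMod n) :=
  SimpleGraph.fromRel (fun u v => v = u + 1)

/-- The families `F_{i,j}` of graphs (closed under isomorphism):
`F_{i,0} = {C_i}` for `i ≥ 3`; `F_{1,1} = {K_4}`; `F_{j,j}` for `j ≥ 2` is obtained from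
`F_{j-1,j-1}` by subdividing one edge once and then applying the `∘` operation at the
subdivision vertex; and `F_{i,j}` for `i > j ≥ 1` is obtained from `F_{j,j}` by `i - j`
successive single-edge subdivisions. -/
inductive MemF : ℕ → ℕ → ∀ {V : Type}, SimpleGraph V → Prop
  | cycle {i : ℕ} (hi : 3 ≤ i) {V : Type} {G : SimpleGraph V}
      (h : Nonempty (G ≃g cyc i)) : MemF i 0 G
  | k4 {V : Type} {G : SimpleGraph V}
      (h : Nonempty (G ≃g (⊤ : SimpleGraph (Fin 4)))) : MemF 1 1 G
  | circ {j : ℕ} (hj : 2 ≤ j) {V : Type} {H : SimpleGraph V}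
      (hH : MemF (j - 1) (j - 1) H) {x y : V} (hxy : H.Adj x y)
      {e1 e2 : Sym2 (Option V)} (he1 : e1 ∈ (subdivide H x y).edgeSet)
      (he2 : e2 ∈ (subdivide H x y).edgeSet)
      {W : Type} {G : SimpleGraph W}
      (hG : IsCircOp (subdivide H x y) e1 e2 none G) : MemF j j G
  | subd {i j : ℕ} (hj : 1 ≤ j) {V : Type} {H : SimpleGraph V}
      (hH : MemF i j H) {x y : V} (hxy : H.Adj x y) {W : Type} {G : SimpleGraph W}
      (hG : Nonempty (G ≃g subdivide H x y)) : MemF (i + 1) j G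

/-- `K_4^+`: the graph obtained from `K_4` by subdividing one edge once. -/
def K4plus : SimpleGraph (Option (Fin 4)) :=
  subdivide (⊤ : SimpleGraph (Fin 4)) 0 1

/-- `L`: the graph obtained from `K_4` by subdividing once each edge
of a perfect matching. -/
def Lgraph : SimpleGraph (Option (Option (Fin 4))) :=
  subdivide (subdivide (⊤ : SimpleGraph (Fin 4)) 0 1) (some 2) (some 3)

/-- The Petersen graph. -/
def petersen : SimpleGraph (ZMod 5 × Fin 2) :=
  SimpleGraph.fromRel (fun u v =>
    (u.2 = 0 ∧ v.2 = 0 ∧ v.1 = u.1 + 1) ∨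
    (u.2 = 1 ∧ v.2 = 1 ∧ v.1 = u.1 + 2) ∨
    (u.2 = 0 ∧ v.2 = 1 ∧ u.1 = v.1))

/-- `R`: the Petersen graph minus one edge. -/
def Rgraph : SimpleGraph (ZMod 5 × Fin 2) :=
  petersen.deleteEdges {s(((0 : ZMod 5), (0 : Fin 2)), ((1 : ZMod 5), (0 : Fin 2)))}

/-- `Q_3`: the 3-dimensional cube graph. -/
def Q3 : SimpleGraph (Fin 2 × Fin 2 × Fin 2) :=
  SimpleGraph.fromRel (fun u v =>
    (u.1 ≠ v.1 ∧ u.2 = v.2) ∨ (u.1 = v.1 ∧ u.2.1 ≠ v.2.1 ∧ u.2.2 = v.2.2) ∨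
    (u.1 = v.1 ∧ u.2.1 = v.2.1 ∧ u.2.2 ≠ v.2.2))

/-- `V_8`: the Wagner graph. -/
def V8 : SimpleGraph (ZMod 8) :=
  SimpleGraph.fromRel (fun u v => v = u + 1 ∨ v = u + 4)

/-- The dodecahedron, presented as the generalized Petersen graph `GP(10,2)`. -/
def dodecahedron : SimpleGraph (ZMod 10 × Fin 2) :=
  SimpleGraph.fromRel (fun u v =>
    (u.2 = 0 ∧ v.2 = 0 ∧ v.1 = u.1 + 1) ∨
    (u.2 = 1 ∧ v.2 = 1 ∧ v.1 = u.1 + 2) ∨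
    (u.2 = 0 ∧ v.2 = 1 ∧ u.1 = v.1))

/-- The families `F^g_{i,j,k}`: 2-connected subcubic graphs obtained from the disjoint
union of `k` copies of `L` (when `g = 4`) or of `R` (when `g = 5`) and one member of
`F_{i,j}` by adding `k+1` edges; when `k ≥ 1`, each added edge joins two different
constituent copies. -/
def MemFG (g i j k : ℕ) {W : Type} (G : SimpleGraph W) : Prop :=
  TwoConnected G ∧ Subcubic G ∧
  ∃ (P : W → Fin (k + 1)) (H : SimpleGraph W),
    H ≤ G ∧ (∀ u v, H.Adj u v → P u = P v) ∧
    MemF i j (H.induce (P ⁻¹' {0})) ∧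
    ((g = 4 ∧ ∀ l : Fin (k + 1), l ≠ 0 → Nonempty ((H.induce (P ⁻¹' {l})) ≃g Lgraph)) ∨
     (g = 5 ∧ ∀ l : Fin (k + 1), l ≠ 0 → Nonempty ((H.induce (P ⁻¹' {l})) ≃g Rgraph))) ∧
    (G.edgeSet \ H.edgeSet).ncard = k + 1 ∧
    (1 ≤ k → ∀ u v, G.Adj u v → ¬ H.Adj u v → P u ≠ P v)

/-- `t_4 = 2/9`, `t_5 = 1/5`. -/
noncomputable def tg (g : ℕ) : ℝ := if g = 4 then 2 / 9 else 1 / 5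

/-- The error function `ε_g` on graphs. -/
noncomputable def eps (g : ℕ) {V : Type} (G : SimpleGraph V) : ℝ := by
  classical
  exact
    if h1 : ∃ p : ℕ × ℕ, 1 ≤ p.1 ∧ p.2 ≤ p.1 ∧ MemF p.1 p.2 G then
      max (1 - (h1.choose.2 : ℝ) * (5 * tg g - 1) - (h1.choose.1 : ℝ) * tg g) 0
    else if h2 : ∃ q : ℕ × ℕ × ℕ, 1 ≤ q.1 ∧ q.2.1 ≤ q.1 ∧ MemFG g q.1 q.2.1 q.2.2 G then
      max (1 - tg g - (h2.choose.2.1 : ℝ) * (5 * tg g - 1) - (h2.choose.1 : ℝ) * tg g) 0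
    else if Nonempty (G ≃g (⊤ : SimpleGraph (Fin 2))) then -tg g
    else 0

/-- The error function `r_g(G)`: the sum of `ε_g(B)` over all blocks `B` of `G`. -/
noncomputable def rg (g : ℕ) {V : Type} (G : SimpleGraph V) : ℝ :=
  ∑ᶠ B ∈ {B : Set V | IsBlock G B}, eps g (G.induce B)

/-- `G` has two vertex-disjoint cycles, each of length less than `g`. -/
def TwoDisjointCyclesLt {V : Type} (G : SimpleGraph V) (g : ℕ) : Prop :=
  ∃ (u v : V) (c1 : G.Walk u u) (c2 : G.Walk v v), c1.IsCycle ∧ c2.IsCycle ∧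
    c1.length < g ∧ c2.length < g ∧ ∀ x, x ∈ c1.support → x ∉ c2.support

/-- `G` contains a (not necessarily induced) subgraph isomorphic to `K`. -/
def ContainsSubgraphCopy {U V : Type} (K : SimpleGraph U) (G : SimpleGraph V) : Prop :=
  ∃ f : U → V, Function.Injective f ∧ ∀ u v, K.Adj u v → G.Adj (f u) (f v)

/-- `G` is obtained from `H` by adding edges, each of which is a cut-edge of `G`. -/
def AddCutEdges {V : Type} (H G : SimpleGraph V) : Prop :=
  H ≤ G ∧ ∀ e ∈ G.edgeSet \ H.edgeSet, G.IsBridge e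

/-- The edges of `H` all lie inside the parts of the partition given by `P`. -/
def PartitionedBy {V ι : Type} (H : SimpleGraph V) (P : V → ι) : Prop :=
  ∀ u v, H.Adj u v → P u = P v

/-- `G` is `g`-minimal: a minimum counterexample to the main theorem. -/
def GMinimal (g : ℕ) {V : Type} [Fintype V] (G : SimpleGraph V) : Prop :=
  Subcubic G ∧ ¬ TwoDisjointCyclesLt G g ∧
  tg g * G.edgeSet.ncard + rg g G < (fvs G : ℝ) ∧
  ∀ (W : Type) [Fintype W] (H : SimpleGraph W), Nat.card W < Nat.card V →
    Subcubic H → ¬ TwoDisjointCyclesLt H g →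
    (fvs H : ℝ) ≤ tg g * H.edgeSet.ncard + rg g H

private lemma subdivide_adj_some {V : Type} (H : SimpleGraph V) (x y u v : V) :
    (subdivide H x y).Adj (some u) (some v) ↔ H.Adj u v ∧ s(u, v) ≠ s(x, y) := by
  rw [subdivide, SimpleGraph.fromRel_adj]
  constructor
  · rintro ⟨hne, h | h⟩
    · exact h
    · exact ⟨h.1.symm, fun e => h.2 (Sym2.eq_swap.trans e)⟩
  · rintro ⟨h, hne⟩
    exact ⟨by simpa using h.ne, Or.inl ⟨h, hne⟩⟩

private lemma subdivide_adj_none {V : Type} (H : SimpleGraph V) (x y u : V) :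
    (subdivide H x y).Adj (some u) none ↔ u = x ∨ u = y := by
  rw [subdivide, SimpleGraph.fromRel_adj]
  constructor
  · rintro ⟨hne, h | h⟩
    · exact h
    · exact h.elim
  · intro h
    exact ⟨by simp, Or.inl h⟩

private lemma projWalk {A : Type} {K : SimpleGraph (Option A)} {F : SimpleGraph A}
    (h1 : ∀ u v : A, K.Adj (some u) (some v) → F.Adj u v) :
    ∀ {s t : Option A} (r : K.Walk s t), (none ∉ r.support) → ∀ (α β : A),
      s = some α → t = some β →
      ∃ q : F.Walk α β, ∀ a b : A, s(a, b) ∈ q.edges → s(some a, some b) ∈ r.edges := by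
  intro s t r
  induction r with
  | nil =>
    intro _ α β hα hβ
    have : α = β := Option.some_injective _ (hα.symm.trans hβ)
    subst this
    exact ⟨Walk.nil, by simp⟩
  | @cons u w t h p ih =>
    intro hn α β hα hβ
    rw [Walk.support_cons] at hn
    have hnp : none ∉ p.support := fun hx => hn (List.mem_cons_of_mem _ hx)
    have hw : w ≠ none := fun e => hn (e ▸ List.mem_cons_of_mem _ p.start_mem_support)
    obtain ⟨γ, rfl⟩ := Option.ne_none_iff_exists'.mp hw
    subst hα
    obtain ⟨q', hq'⟩ := ih hnp γ β rfl hβ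
    refine ⟨Walk.cons (h1 α γ h) q', ?_⟩
    intro a b hab
    rw [Walk.edges_cons] at hab ⊢
    rcases List.mem_cons.mp hab with hab | hab
    · rw [Sym2.eq_iff] at hab
      rcases hab with ⟨rfl, rfl⟩ | ⟨rfl, rfl⟩
      · exact List.mem_cons_self
      · exact List.mem_cons.mpr (Or.inl Sym2.eq_swap)
    · exact List.mem_cons_of_mem _ (hq' a b hab)

private lemma lemU {A : Type} [DecidableEq A] {F : SimpleGraph A} (hF : F.IsAcyclic) {α β : A}
    (hadj : F.Adj α β) (q : F.Walk α β) (hq : s(α, β) ∉ q.edges) : False := by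
  have huniq := isAcyclic_iff_path_unique.mp hF (SimpleGraph.Path.singleton hadj) q.toPath
  apply hq
  apply Walk.edges_toPath_subset
  rw [← huniq]
  simp [SimpleGraph.Path.singleton]

private lemma lemC {A : Type} [DecidableEq A] {K : SimpleGraph (Option A)} {F : SimpleGraph A}
    (h1 : ∀ u v : A, K.Adj (some u) (some v) → F.Adj u v) (hF : F.IsAcyclic)
    {s : Option A} (c : K.Walk s s) (hc : c.IsCycle) (hn : none ∉ c.support) : False := by
  cases c with
  | nil => exact hc.ne_nil rfl
  | @cons _ w _ h p =>
    rw [Walk.support_cons] at hn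
    have hns : s ≠ none := fun e => hn (e ▸ List.mem_cons_self)
    have hnp : none ∉ p.support := fun hx => hn (List.mem_cons_of_mem _ hx)
    have hw : w ≠ none := fun e => hn (e ▸ List.mem_cons_of_mem _ p.start_mem_support)
    obtain ⟨u, rfl⟩ := Option.ne_none_iff_exists'.mp hns
    obtain ⟨u₁, rfl⟩ := Option.ne_none_iff_exists'.mp hw
    obtain ⟨q, hq⟩ := projWalk h1 p hnp u₁ u rfl rfl
    have hFadj : F.Adj u u₁ := h1 u u₁ h
    refine lemU hF hFadj.symm q ?_
    intro hmem
    have h2 : s(some u₁, some u) ∈ p.edges := hq u₁ u hmem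
    have h3 : (Walk.cons h p).edges.Nodup := hc.isCircuit.isTrail.edges_nodup
    rw [Walk.edges_cons, List.nodup_cons] at h3
    exact h3.1 (Sym2.eq_swap ▸ h2)

private lemma lemD {A : Type} {K : SimpleGraph (Option A)}
    (c : K.Walk none none) (hc : c.IsCycle) :
    ∃ (u₁ u₂ : A) (r : K.Walk (some u₁) (some u₂)), u₁ ≠ u₂ ∧
      K.Adj none (some u₁) ∧ K.Adj none (some u₂) ∧ none ∉ r.support := by
  cases c with
  | nil => exact absurd rfl hc.ne_nil
  | @cons _ w _ h p =>
    have hw : w ≠ none := fun e => ((e ▸ h : K.Adj none none)).ne rfl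
    obtain ⟨u₁, rfl⟩ := Option.ne_none_iff_exists'.mp hw
    obtain ⟨w₂, h₂, r', hrev⟩ := Walk.exists_eq_cons_of_ne (by simp) p.reverse
    have hw₂ : w₂ ≠ none := fun e => ((e ▸ h₂ : K.Adj none none)).ne rfl
    obtain ⟨u₂, rfl⟩ := Option.ne_none_iff_exists'.mp hw₂
    have hp : p = r'.reverse.concat h₂.symm := by
      rw [← p.reverse_reverse, hrev, Walk.reverse_cons, Walk.concat_eq_append]
    have hsup : p.support = r'.reverse.support ++ [none] := by
      rw [hp, Walk.support_concat]
    have hnd : p.support.Nodup := by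
      have h4 := hc.support_nodup
      rwa [Walk.support_cons, List.tail_cons] at h4
    rw [hsup, List.nodup_append] at hnd
    have hnone : none ∉ r'.reverse.support := fun hx => hnd.2.2 _ hx _ (List.mem_singleton_self _) rfl
    refine ⟨u₁, u₂, r'.reverse, ?_, h, h₂, hnone⟩
    intro heq
    subst heq
    have hpath : r'.reverse.IsPath := Walk.IsPath.mk' hnd.1
    have hnil : r'.reverse = Walk.nil :=
      congrArg Subtype.val (SimpleGraph.Path.loop_eq ⟨r'.reverse, hpath⟩)
    have hlen : (Walk.cons h p).length = 2 := by
      rw [Walk.length_cons, hp, hnil, Walk.length_concat, Walk.length_nil]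
    have := hc.three_le_length
    omega

private lemma lemM1 {A : Type} [DecidableEq A] {K : SimpleGraph (Option A)} {F : SimpleGraph A}
    (hF : F.IsAcyclic)
    (h1 : ∀ u v : A, K.Adj (some u) (some v) → F.Adj u v)
    (h2 : ∀ u v : A, K.Adj none (some u) → K.Adj none (some v) → u = v) :
    K.IsAcyclic := by
  intro v c hc
  by_cases hn : (none : Option A) ∈ c.support
  · obtain ⟨u₁, u₂, r, hne, hadj₁, hadj₂, _⟩ := lemD (c.rotate _ hn) (hc.rotate hn)
    exact hne (h2 _ _ hadj₁ hadj₂)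
  · exact lemC h1 hF c hc hn

private lemma lemM2 {A : Type} [DecidableEq A] {K : SimpleGraph (Option A)} {F : SimpleGraph A}
    (hF : F.IsAcyclic) {a b : A} (hab : F.Adj a b)
    (h1 : ∀ u v : A, K.Adj (some u) (some v) → F.Adj u v ∧ s(u, v) ≠ s(a, b))
    (h2 : ∀ u : A, K.Adj none (some u) → u = a ∨ u = b) : K.IsAcyclic := by
  intro v c hc
  by_cases hn : (none : Option A) ∈ c.support
  · obtain ⟨u₁, u₂, r, hne, hadj₁, hadj₂, hnr⟩ := lemD (c.rotate _ hn) (hc.rotate hn)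
    obtain ⟨q, hq⟩ := projWalk (fun u v h => (h1 u v h).1) r hnr u₁ u₂ rfl rfl
    have hcase : (u₁ = a ∧ u₂ = b) ∨ (u₁ = b ∧ u₂ = a) := by
      rcases h2 u₁ hadj₁ with h' | h' <;> rcases h2 u₂ hadj₂ with h'' | h'' <;>
        first
          | (exact absurd (h'.trans h''.symm) hne)
          | (exact Or.inl ⟨h', h''⟩)
          | (exact Or.inr ⟨h', h''⟩)
    have hFadj : F.Adj u₁ u₂ := by
      rcases hcase with ⟨rfl, rfl⟩ | ⟨rfl, rfl⟩
      · exact hab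
      · exact hab.symm
    have hse : s(u₁, u₂) = s(a, b) := by
      rcases hcase with ⟨rfl, rfl⟩ | ⟨rfl, rfl⟩
      · rfl
      · exact Sym2.eq_swap
    refine lemU hF hFadj q ?_
    intro hmem
    exact (h1 u₁ u₂ (r.adj_of_mem_edges (hq u₁ u₂ hmem))).2 hse
  · exact lemC (fun u v h => (h1 u v h).1) hF c hc hn

private lemma key {V : Type} {H : SimpleGraph V} {x y : V}
    {W' : Set (Sym2 (Option V))} {W : Set (Sym2 V)} {S : Set V}
    (hS : IsFVS (H.deleteEdges W) S)
    (hsome : ∀ u v : V, ((subdivide H x y).deleteEdges W').Adj (some u) (some v) →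
      H.Adj u v ∧ s(u, v) ∉ W)
    (hnone : (∀ u v : V, ((subdivide H x y).deleteEdges W').Adj (some u) none →
        ((subdivide H x y).deleteEdges W').Adj (some v) none → u = v) ∨
      (H.Adj x y ∧ s(x, y) ∉ W)) :
    IsFVS ((subdivide H x y).deleteEdges W') (Option.some '' S) := by
  classical
  set G' := (subdivide H x y).deleteEdges W' with hG'
  have hF : ((H.deleteEdges W).induce Sᶜ).IsAcyclic := hS
  set F := (H.deleteEdges W).induce Sᶜ with hFdef
  have hmemnone : (none : Option V) ∈ (Option.some '' S)ᶜ := by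
    rintro ⟨w, -, hw⟩; exact Option.some_ne_none w hw
  have hmemsome : ∀ u : ↥(Sᶜ), (some u.1 : Option V) ∈ (Option.some '' S)ᶜ := by
    rintro u ⟨w, hwS, hw⟩
    exact u.2 ((Option.some_injective _ hw) ▸ hwS)
  let ψ : Option ↥(Sᶜ) → ↥((Option.some '' S)ᶜ) := fun o =>
    Option.elim o ⟨none, hmemnone⟩ (fun u => ⟨some u.1, hmemsome u⟩)
  set K := (G'.induce (Option.some '' S)ᶜ).comap ψ with hK
  have hsub : ∀ u v : ↥(Sᶜ), K.Adj (some u) (some v) → G'.Adj (some u.1) (some v.1) :=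
    fun _ _ h => h
  have hF1 : ∀ u v : ↥(Sᶜ), K.Adj (some u) (some v) → F.Adj u v := by
    intro u v h
    have h' := hsub u v h
    rw [hG', SimpleGraph.deleteEdges_adj] at h'
    have h'' := hsome u.1 v.1 (by rw [hG', SimpleGraph.deleteEdges_adj]; exact h')
    show (H.deleteEdges W).Adj u.1 v.1
    rw [SimpleGraph.deleteEdges_adj]
    exact h''
  have hF2 : ∀ u v : ↥(Sᶜ), K.Adj (some u) (some v) → s(u.1, v.1) ≠ s(x, y) := by
    intro u v h
    have h' := hsub u v h
    rw [hG', SimpleGraph.deleteEdges_adj] at h'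
    exact ((subdivide_adj_some H x y u.1 v.1).mp h'.1).2
  have hnoneK : ∀ u : ↥(Sᶜ), K.Adj none (some u) → G'.Adj (some u.1) none :=
    fun _ h => (h : G'.Adj none _).symm
  have hnoneK' : ∀ u : ↥(Sᶜ), K.Adj none (some u) → u.1 = x ∨ u.1 = y := by
    intro u h
    have h' := hnoneK u h
    rw [hG', SimpleGraph.deleteEdges_adj] at h'
    exact (subdivide_adj_none H x y u.1).mp h'.1
  have hKac : K.IsAcyclic := by
    rcases hnone with hone | ⟨haxy, hWxy⟩
    · exact lemM1 hF hF1 (fun u v h h' =>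
        Subtype.ext (hone u.1 v.1 (hnoneK u h) (hnoneK v h')))
    · by_cases hx : x ∈ S
      · refine lemM1 hF hF1 ?_
        intro u v h h'
        have hu := hnoneK' u h
        have hv := hnoneK' v h'
        have hux : u.1 ≠ x := fun e => u.2 (e ▸ hx)
        have hvx : v.1 ≠ x := fun e => v.2 (e ▸ hx)
        apply Subtype.ext
        rcases hu with hu | hu
        · exact absurd hu hux
        · rcases hv with hv | hv
          · exact absurd hv hvx
          · exact hu.trans hv.symm
      · by_cases hy : y ∈ S
        · refine lemM1 hF hF1 ?_
          intro u v h h'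
          have hu := hnoneK' u h
          have hv := hnoneK' v h'
          have huy : u.1 ≠ y := fun e => u.2 (e ▸ hy)
          have hvy : v.1 ≠ y := fun e => v.2 (e ▸ hy)
          apply Subtype.ext
          rcases hu with hu | hu
          · rcases hv with hv | hv
            · exact hu.trans hv.symm
            · exact absurd hv hvy
          · exact absurd hu huy
        · refine lemM2 hF (a := ⟨x, hx⟩) (b := ⟨y, hy⟩) ?_ ?_ ?_
          · show (H.deleteEdges W).Adj x y
            rw [SimpleGraph.deleteEdges_adj]
            exact ⟨haxy, hWxy⟩
          · intro u v h
            refine ⟨hF1 u v h, ?_⟩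
            intro he
            apply hF2 u v h
            have := congrArg (Sym2.map Subtype.val) he
            rwa [Sym2.map_pair_eq, Sym2.map_pair_eq] at this
          · intro u h
            rcases hnoneK' u h with h' | h'
            · exact Or.inl (Subtype.ext h')
            · exact Or.inr (Subtype.ext h')
  -- transfer along φ
  show (G'.induce (Option.some '' S)ᶜ).IsAcyclic
  intro v c hc
  let φ : ↥((Option.some '' S)ᶜ) → Option ↥(Sᶜ) := fun a =>
    match a with
    | ⟨none, _⟩ => none
    | ⟨some u, h⟩ => some ⟨u, fun huS => h ⟨u, huS, rfl⟩⟩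
  have hψφ : ∀ a, ψ (φ a) = a := by
    rintro ⟨o, h⟩
    cases o with
    | none => rfl
    | some u => rfl
  let hom : G'.induce (Option.some '' S)ᶜ →g K :=
    ⟨φ, by
      rintro ⟨oa, ha⟩ ⟨ob, hb⟩ hab
      cases oa <;> cases ob <;> exact hab⟩
  have φinj : Function.Injective hom := by
    intro a b h
    have h1 : ψ (hom a) = a := hψφ a
    have h2 : ψ (hom b) = b := hψφ b
    rw [← h1, ← h2, h]
  exact hKac (c.map hom) (hc.map φinj)

private lemma fvs_le_ncard {V : Type} (G : SimpleGraph V) {S : Set V} (h : IsFVS G S) :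
    fvs G ≤ S.ncard := Nat.sInf_le ⟨S, h, rfl⟩

private lemma exists_fvs_min {V : Type} (G : SimpleGraph V) :
    ∃ S : Set V, IsFVS G S ∧ S.ncard = fvs G := by
  have hne : {n : ℕ | ∃ S : Set V, IsFVS G S ∧ S.ncard = n}.Nonempty := by
    refine ⟨(Set.univ : Set V).ncard, Set.univ, ?_, rfl⟩
    intro v c hc
    exact absurd v.2 (by simp)
  exact Nat.sInf_mem hne

private lemma final {V : Type} (H : SimpleGraph V) (x y : V)
    (W : Set (Sym2 V)) (W' : Set (Sym2 (Option V))) (p : ℝ)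
    (hfvs : (fvs (H.deleteEdges W) : ℝ) ≤ p)
    (hsome : ∀ u v : V, ((subdivide H x y).deleteEdges W').Adj (some u) (some v) →
      H.Adj u v ∧ s(u, v) ∉ W)
    (hnone : (∀ u v : V, ((subdivide H x y).deleteEdges W').Adj (some u) none →
        ((subdivide H x y).deleteEdges W').Adj (some v) none → u = v) ∨
      (H.Adj x y ∧ s(x, y) ∉ W)) :
    (fvs ((subdivide H x y).deleteEdges W') : ℝ) ≤ p := by
  obtain ⟨S, hS, hcard⟩ := exists_fvs_min (H.deleteEdges W)
  have h1 := key hS hsome hnone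
  have h2 : fvs ((subdivide H x y).deleteEdges W') ≤ (Option.some '' S).ncard :=
    fvs_le_ncard _ h1
  rw [Set.ncard_image_of_injective S (Option.some_injective V), hcard] at h2
  exact le_trans (Nat.cast_le.mpr h2) hfvs

/-- subdividing an edge preserves upper bounds on the feedback vertex
number under deletion of `k ∈ {0,1}` edges. -/
theorem statement6 {V : Type} [Fintype V] (H : SimpleGraph V) (x y : V)
    (hxy : H.Adj x y) (k : ℕ) (hk : k = 0 ∨ k = 1) (p : ℝ)
    (hH : ∀ W : Set (Sym2 V), W ⊆ H.edgeSet → W.ncard = k →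
      (fvs (H.deleteEdges W) : ℝ) ≤ p) :
    ∀ W' : Set (Sym2 (Option V)), W' ⊆ (subdivide H x y).edgeSet → W'.ncard = k →
      (fvs ((subdivide H x y).deleteEdges W') : ℝ) ≤ p := by
  intro W' hW' hcard
  rcases hk with rfl | rfl
  · have hW'e : W' = ∅ := (Set.ncard_eq_zero (Set.toFinite W')).mp hcard
    subst hW'e
    refine final H x y ∅ ∅ p (hH ∅ (Set.empty_subset _) (Set.ncard_empty _)) ?_ ?_
    · intro u v h
      rw [SimpleGraph.deleteEdges_adj] at h
      exact ⟨((subdivide_adj_some H x y u v).mp h.1).1, Set.notMem_empty _⟩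
    · exact Or.inr ⟨hxy, Set.notMem_empty _⟩
  · obtain ⟨e, rfl⟩ := Set.ncard_eq_one.mp hcard
    have he : e ∈ (subdivide H x y).edgeSet := hW' rfl
    clear hW' hcard
    revert he
    induction e using Sym2.ind with
    | _ a b =>
      intro he
      rw [SimpleGraph.mem_edgeSet] at he
      have main : ∀ u₀ : V, (subdivide H x y).Adj (some u₀) none →
          (fvs ((subdivide H x y).deleteEdges {s(some u₀, none)}) : ℝ) ≤ p := by
        intro u₀ he'
        have hu₀ := (subdivide_adj_none H x y u₀).mp he'
        refine final H x y {s(x, y)} _ p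
          (hH _ (Set.singleton_subset_iff.mpr hxy) (Set.ncard_singleton _)) ?_ ?_
        · intro u v h
          rw [SimpleGraph.deleteEdges_adj] at h
          have h2 := (subdivide_adj_some H x y u v).mp h.1
          exact ⟨h2.1, by rw [Set.mem_singleton_iff]; exact h2.2⟩
        · left
          intro u v h h'
          rw [SimpleGraph.deleteEdges_adj] at h h'
          have hu := (subdivide_adj_none H x y u).mp h.1
          have hv := (subdivide_adj_none H x y v).mp h'.1
          have hne : u ≠ u₀ := by
            rintro rfl
            exact h.2 rfl
          have hne' : v ≠ u₀ := by
            rintro rfl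
            exact h'.2 rfl
          rcases hu₀ with rfl | rfl <;> rcases hu with rfl | rfl <;>
            rcases hv with rfl | rfl <;>
            first
              | rfl
              | (exact absurd rfl hne)
              | (exact absurd rfl hne')
      match a, b, he with
      | some u₀, some v₀, he =>
        have hadj := (subdivide_adj_some H x y u₀ v₀).mp he
        refine final H x y {s(u₀, v₀)} _ p
          (hH _ (Set.singleton_subset_iff.mpr hadj.1) (Set.ncard_singleton _)) ?_ ?_
        · intro u v h
          rw [SimpleGraph.deleteEdges_adj] at h
          refine ⟨((subdivide_adj_some H x y u v).mp h.1).1, ?_⟩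
          intro hW
          rw [Set.mem_singleton_iff] at hW
          apply h.2
          rw [Set.mem_singleton_iff]
          have := congrArg (Sym2.map Option.some) hW
          rwa [Sym2.map_pair_eq, Sym2.map_pair_eq] at this
        · refine Or.inr ⟨hxy, ?_⟩
          rw [Set.mem_singleton_iff]
          exact fun hc => hadj.2 hc.symm
      | some u₀, none, he => exact main u₀ he
      | none, some v₀, he =>
        rw [show s((none : Option V), some v₀) = s(some v₀, none) from Sym2.eq_swap]
        exact main v₀ he.symm
      | none, none, he => exact absurd rfl he.ne


end InducedForest
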